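/- arXiv:1711.10783 — 2 statements merged into one kernel-verified Lean document; each statement's English description precedes it below -/
import Mathlib

section
/- Let x be a random vector in ℝ^d on a probability space with integrable second moments, let I be a nonempty finite index set, and let (x̂_i, P_i), i ∈ I, be estimate pairs of x such that at least one pair (x̂_j, P_j) is unbiased and conservative. Then for any vector x̂ ∈ ℝ^d and any symmetric matrix P ∈ ℝ^{d×d} satisfying P - (P_i + (x̂ - x̂_i)(x̂ - x̂_i)ᵀ) positive semi-definite for all i ∈ I, the pair (x̂, P) is conservative, i.e., P - E[(x - x̂)(x - x̂)ᵀ] is positive semi-definite. -/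
open MeasureTheory Matrix

/-- The error "covariance" matrix `E[(x - a)(x - a)ᵀ]` of a random vector `x`
relative to a fixed vector `a`. -/
noncomputable def errCov {Ω : Type*} [MeasurableSpace Ω] (μ : Measure Ω) {d : ℕ}
    (x : Ω → Fin d → ℝ) (a : Fin d → ℝ) : Matrix (Fin d) (Fin d) ℝ :=
  Matrix.of fun r s => ∫ ω, (x ω r - a r) * (x ω s - a s) ∂μ

lemma integrable_err {Ω : Type*} [MeasurableSpace Ω] (μ : Measure Ω)
    [IsProbabilityMeasure μ] {d : ℕ} (x : Ω → Fin d → ℝ)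
    (hx1 : ∀ r, Integrable (fun ω => x ω r) μ)
    (hx2 : ∀ r s, Integrable (fun ω => x ω r * x ω s) μ)
    (r s : Fin d) (a b : ℝ) :
    Integrable (fun ω => (x ω r - a) * (x ω s - b)) μ := by
  have : (fun ω => (x ω r - a) * (x ω s - b)) =
      fun ω => x ω r * x ω s - b * x ω r - a * x ω s + a * b := by
    funext ω; ring
  rw [this]
  exact ((((hx2 r s).sub ((hx1 r).const_mul b)).sub ((hx1 s).const_mul a)).add
    (integrable_const (a * b)))

/-- Lemma 1: if at least one estimate pair `(xhat j, P j)` is unbiased and conservative,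
then any pair `(y, Q)` with `Q ≥ P i + (y - xhat i)(y - xhat i)ᵀ` for all `i` is conservative. -/
theorem conservative_of_dominates_all {Ω : Type*} [MeasurableSpace Ω]
    (μ : Measure Ω) [IsProbabilityMeasure μ] {d : ℕ} (x : Ω → Fin d → ℝ)
    (hx1 : ∀ r, Integrable (fun ω => x ω r) μ)
    (hx2 : ∀ r s, Integrable (fun ω => x ω r * x ω s) μ)
    {I : Type*} [Fintype I] [Nonempty I]
    (xhat : I → Fin d → ℝ) (P : I → Matrix (Fin d) (Fin d) ℝ)
    (hPsymm : ∀ i, (P i).IsSymm)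
    (hgood : ∃ j : I, (∀ r, ∫ ω, x ω r ∂μ = xhat j r) ∧
      (P j - errCov μ x (xhat j)).PosSemidef)
    (y : Fin d → ℝ) (Q : Matrix (Fin d) (Fin d) ℝ) (hQsymm : Q.IsSymm)
    (hdom : ∀ i : I,
      (Q - (P i + Matrix.vecMulVec (y - xhat i) (y - xhat i))).PosSemidef) :
    (Q - errCov μ x y).PosSemidef := by
  obtain ⟨j, hunb, hcons⟩ := hgood
  have key : errCov μ x y = errCov μ x (xhat j)
      + Matrix.vecMulVec (y - xhat j) (y - xhat j) := by
    ext r s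
    simp only [errCov, Matrix.add_apply, Matrix.of_apply, Matrix.vecMulVec_apply,
      Pi.sub_apply]
    have hzr : ∫ ω, (x ω r - xhat j r) ∂μ = 0 := by
      rw [integral_sub (hx1 r) (integrable_const _), integral_const]
      simp [hunb r]
    have hzs : ∫ ω, (x ω s - xhat j s) ∂μ = 0 := by
      rw [integral_sub (hx1 s) (integrable_const _), integral_const]
      simp [hunb s]
    have hexp : (fun ω => (x ω r - y r) * (x ω s - y s)) =
        fun ω => (x ω r - xhat j r) * (x ω s - xhat j s)
          + (xhat j s - y s) * (x ω r - xhat j r)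
          + (xhat j r - y r) * (x ω s - xhat j s)
          + (y r - xhat j r) * (y s - xhat j s) := by
      funext ω; ring
    calc ∫ ω, (x ω r - y r) * (x ω s - y s) ∂μ
        = ∫ ω, ((x ω r - xhat j r) * (x ω s - xhat j s)
          + (xhat j s - y s) * (x ω r - xhat j r)
          + (xhat j r - y r) * (x ω s - xhat j s)
          + (y r - xhat j r) * (y s - xhat j s)) ∂μ := by rw [← hexp]
      _ = (∫ ω, (x ω r - xhat j r) * (x ω s - xhat j s) ∂μ)
          + (xhat j s - y s) * ∫ ω, (x ω r - xhat j r) ∂μ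
          + (xhat j r - y r) * ∫ ω, (x ω s - xhat j s) ∂μ
          + (y r - xhat j r) * (y s - xhat j s) := by
          rw [integral_add, integral_add, integral_add, integral_const,
            integral_const_mul, integral_const_mul]
          · simp
          · exact integrable_err μ x hx1 hx2 r s _ _
          · exact ((hx1 r).sub (integrable_const _)).const_mul _
          · exact (integrable_err μ x hx1 hx2 r s _ _).add
              (((hx1 r).sub (integrable_const _)).const_mul _)
          · exact ((hx1 s).sub (integrable_const _)).const_mul _
          · exact ((integrable_err μ x hx1 hx2 r s _ _).add
              (((hx1 r).sub (integrable_const _)).const_mul _)).add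
              (((hx1 s).sub (integrable_const _)).const_mul _)
          · exact integrable_const _
      _ = (∫ ω, (x ω r - xhat j r) * (x ω s - xhat j s) ∂μ)
          + (y r - xhat j r) * (y s - xhat j s) := by rw [hzr, hzs]; ring
  have : Q - errCov μ x y =
      (Q - (P j + Matrix.vecMulVec (y - xhat j) (y - xhat j)))
      + (P j - errCov μ x (xhat j)) := by
    rw [key]; ring_nf; abel
  rw [this]
  exact (hdom j).add hcons
end

section
/- Let ν be a σ-finite measure on a measurable space, let I be a nonempty finite index set, let f_i, i ∈ I, be probability density functions with respect to ν that are strictly positive ν-almost everywhere, and let ω_i > 0 with Σ_{i∈I} ω_i = 1. Suppose C := ∫ Π_{i∈I} f_i^{ω_i} dν satisfies 0 < C < ∞, and define the GCI fusion f_GCI := C^{-1} Π_{i∈I} f_i^{ω_i}. Then f_GCI minimizes the weighted sum of Kullback–Leibler divergences: for every probability density f with respect to ν, Σ_{i∈I} ω_i D_KL(f ‖ f_i) ≥ Σ_{i∈I} ω_i D_KL(f_GCI ‖ f_i), where D_KL(f ‖ g) = ∫ f log(f/g) dν. -/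
open MeasureTheory Classical

/-- Core one-sided bound: `x^p y^q |log y - log x| ≤ q⁻¹ x^(p+q)` when `y ≤ x`. -/
private lemma gci_core_bnd {x y p q : ℝ} (hx : 0 < x) (hy : 0 < y) (hq : 0 < q) (hyx : y ≤ x) :
    x ^ p * y ^ q * |Real.log y - Real.log x| ≤ q⁻¹ * x ^ (p + q) := by
  set s : ℝ := y / x with hs
  have hs0 : 0 < s := div_pos hy hx
  have hs1 : s ≤ 1 := (div_le_one hx).2 hyx
  have hsq1 : s ^ q ≤ 1 := Real.rpow_le_one hs0.le hs1 hq.le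
  have h1 : |Real.log (s ^ q) * s ^ q| < 1 :=
    Real.abs_log_mul_self_lt _ (Real.rpow_pos_of_pos hs0 q) hsq1
  have hlog : Real.log (s ^ q) = q * Real.log s := Real.log_rpow hs0 q
  have hL : |Real.log y - Real.log x| = |Real.log s| := by
    rw [hs, Real.log_div hy.ne' hx.ne', abs_sub_comm]
  have key : s ^ q * |Real.log s| ≤ q⁻¹ := by
    have h2 : q * (s ^ q * |Real.log s|) ≤ 1 := by
      calc q * (s ^ q * |Real.log s|) = |Real.log (s ^ q) * s ^ q| := by
            rw [hlog, abs_mul, abs_mul, abs_of_pos (Real.rpow_pos_of_pos hs0 q),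
              abs_of_pos hq]; ring
        _ ≤ 1 := h1.le
    calc s ^ q * |Real.log s| = q⁻¹ * (q * (s ^ q * |Real.log s|)) := by
          field_simp
      _ ≤ q⁻¹ * 1 := mul_le_mul_of_nonneg_left h2 (inv_nonneg.2 hq.le)
      _ = q⁻¹ := mul_one _
  have hxy : x ^ p * y ^ q = x ^ (p + q) * s ^ q := by
    rw [hs, Real.div_rpow hy.le hx.le, Real.rpow_add hx]
    field_simp
  calc x ^ p * y ^ q * |Real.log y - Real.log x|
      = x ^ (p + q) * (s ^ q * |Real.log s|) := by rw [hxy, hL]; ring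
    _ ≤ x ^ (p + q) * q⁻¹ :=
        mul_le_mul_of_nonneg_left key (Real.rpow_pos_of_pos hx _).le
    _ = q⁻¹ * x ^ (p + q) := mul_comm _ _

/-- Symmetric bound: `x^p y^q |log y - log x| ≤ (min p q)⁻¹ (x^(p+q) + y^(p+q))`. -/
private lemma gci_pair_bnd {x y p q : ℝ} (hx : 0 < x) (hy : 0 < y) (hp : 0 < p) (hq : 0 < q) :
    x ^ p * y ^ q * |Real.log y - Real.log x|
      ≤ (min p q)⁻¹ * (x ^ (p + q) + y ^ (p + q)) := by
  have hm : 0 < min p q := lt_min hp hq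
  have hx' := (Real.rpow_pos_of_pos hx (p + q)).le
  have hy' := (Real.rpow_pos_of_pos hy (p + q)).le
  rcases le_total y x with h | h
  · calc x ^ p * y ^ q * |Real.log y - Real.log x| ≤ q⁻¹ * x ^ (p + q) :=
        gci_core_bnd hx hy hq h
      _ ≤ (min p q)⁻¹ * (x ^ (p + q) + y ^ (p + q)) := by
        have h1 : q⁻¹ ≤ (min p q)⁻¹ := inv_anti₀ hm (min_le_right _ _)
        nlinarith [inv_nonneg.2 hq.le]
  · calc x ^ p * y ^ q * |Real.log y - Real.log x|
        = y ^ q * x ^ p * |Real.log x - Real.log y| := by rw [abs_sub_comm]; ring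
      _ ≤ p⁻¹ * y ^ (q + p) := gci_core_bnd hy hx hp h
      _ ≤ (min p q)⁻¹ * (x ^ (p + q) + y ^ (p + q)) := by
        have h1 : p⁻¹ ≤ (min p q)⁻¹ := inv_anti₀ hm (min_le_left _ _)
        rw [add_comm q p]
        nlinarith [inv_nonneg.2 hp.le]

/-- An `EReal` finite sum with a `⊤` term and no `⊥` terms is `⊤`. -/
private lemma gci_ereal_sum_eq_top {I : Type*} [Fintype I] (F : I → EReal) (i : I)
    (hi : F i = ⊤) (hb : ∀ j, F j ≠ ⊥) : ∑ j, F j = ⊤ := by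
  rw [← Finset.add_sum_erase _ _ (Finset.mem_univ i), hi]
  refine EReal.top_add_of_ne_bot ?_
  refine Finset.sum_induction F (fun x => x ≠ ⊥) (fun a b ha hb => ?_) (by simp)
    (fun j _ => hb j)
  simp [EReal.add_eq_bot_iff, ha, hb]

private lemma gci_coe_sum {I : Type*} (s : Finset I) (r : I → ℝ) :
    ((∑ i ∈ s, r i : ℝ) : EReal) = ∑ i ∈ s, ((r i : ℝ) : EReal) := by
  induction s using Finset.cons_induction with
  | empty => simp
  | cons i s hi ih => rw [Finset.sum_cons, Finset.sum_cons, EReal.coe_add, ih]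

noncomputable def klDivR {α : Type*} [MeasurableSpace α] (ν : Measure α)
    (f g : α → ℝ) : EReal :=
  if Integrable (fun a => f a * Real.log (f a / g a)) ν ∧ (∀ᵐ a ∂ν, g a = 0 → f a = 0)
  then ((∫ a, f a * Real.log (f a / g a) ∂ν : ℝ) : EReal)
  else ⊤

/-- The KLA characterization of GCI fusion: the normalized weighted geometric mean
`fGCI = C⁻¹ ∏ i, f i ^ w i` minimizes the weighted sum of Kullback–Leibler
divergences `∑ i, w i * D_KL(f ‖ f i)` over all probability densities `f` w.r.t. `ν`. -/
theorem gci_minimizes_weighted_kl {α : Type*} [MeasurableSpace α]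
    (ν : Measure α) [SigmaFinite ν]
    {I : Type*} [Fintype I] [Nonempty I]
    (f : I → α → ℝ) (hfmeas : ∀ i, Measurable (f i))
    (hfpos : ∀ i, ∀ᵐ a ∂ν, 0 < f i a)
    (hfint : ∀ i, ∫ a, f i a ∂ν = 1)
    (w : I → ℝ) (hw : ∀ i, 0 < w i) (hw1 : ∑ i, w i = 1)
    (C : ℝ) (hC : C = ∫ a, ∏ i, f i a ^ w i ∂ν) (hCpos : 0 < C)
    (hCfin : Integrable (fun a => ∏ i, f i a ^ w i) ν)
    (fGCI : α → ℝ) (hfGCI : fGCI = fun a => C⁻¹ * ∏ i, f i a ^ w i)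
    (g : α → ℝ) (hgmeas : Measurable g) (hg0 : ∀ᵐ a ∂ν, 0 ≤ g a)
    (hgint : ∫ a, g a ∂ν = 1) :
    (∑ i, (w i : EReal) * klDivR ν fGCI (f i))
      ≤ ∑ i, (w i : EReal) * klDivR ν g (f i) := by
  classical
  set G : α → ℝ := fun a => ∏ i, f i a ^ w i with hG
  have hae : ∀ᵐ a ∂ν, ∀ i, 0 < f i a := (ae_all_iff).2 hfpos
  have hfInt : ∀ i, Integrable (f i) ν := by
    intro i
    by_contra h
    have := hfint i
    rw [integral_undef h] at this
    exact one_ne_zero this.symm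
  have hGmeas : Measurable G := by
    apply Finset.measurable_prod
    intro i _
    exact (hfmeas i).pow measurable_const
  -- log of the geometric mean
  have hlogG : ∀ a, (∀ i, 0 < f i a) → Real.log (G a) = ∑ i, w i * Real.log (f i a) := by
    intro a ha
    rw [hG]
    rw [Real.log_prod (fun i _ => (Real.rpow_pos_of_pos (ha i) (w i)).ne')]
    exact Finset.sum_congr rfl fun i _ => Real.log_rpow (ha i) (w i)
  -- integrability of any weighted geometric mean with nonneg weights summing to 1
  have hgeom : ∀ v : I → ℝ, (∀ i, 0 ≤ v i) → (∑ i, v i) = 1 →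
      Integrable (fun a => ∏ i, f i a ^ v i) ν := by
    intro v hv hv1
    have hmeas : Measurable fun a => ∏ i, f i a ^ v i :=
      Finset.measurable_prod _ fun i _ => (hfmeas i).pow measurable_const
    refine Integrable.mono'
      (integrable_finset_sum Finset.univ fun i _ => (hfInt i).const_mul (v i))
      hmeas.aestronglyMeasurable ?_
    filter_upwards [hae] with a ha
    have hnn : 0 ≤ ∏ i, f i a ^ v i :=
      Finset.prod_nonneg fun i _ => (Real.rpow_pos_of_pos (ha i) _).le
    rw [Real.norm_eq_abs, abs_of_nonneg hnn]
    exact Real.geom_mean_le_arith_mean_weighted _ _ _ (fun i _ => hv i) hv1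
      (fun i _ => (ha i).le)
  -- pairwise integrability
  have hpair : ∀ i j : I,
      Integrable (fun a => G a * |Real.log (f j a) - Real.log (f i a)|) ν := by
    intro i j
    rcases eq_or_ne i j with rfl | hij
    · simp only [sub_self, abs_zero, mul_zero]
      exact integrable_zero _ _ _
    · set v : I → ℝ := fun k =>
        w k + (if k = i then w j else 0) - (if k = j then w j else 0) with hv
      set v' : I → ℝ := fun k =>
        w k + (if k = j then w i else 0) - (if k = i then w i else 0) with hv'
      have hvnn : ∀ k, 0 ≤ v k := by
        intro k
        simp only [hv]
        split_ifs with h1 h2 h3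
        · exact absurd (h1.symm.trans h2) hij
        · linarith [(hw k).le, (hw j).le]
        · linarith [(hw k).le, (hw j).le, (show w k = w j by rw [h3])]
        · linarith [(hw k).le]
      have hv'nn : ∀ k, 0 ≤ v' k := by
        intro k
        simp only [hv']
        split_ifs with h1 h2 h3
        · exact absurd (h2.symm.trans h1) hij
        · linarith [(hw k).le, (hw i).le]
        · linarith [(hw k).le, (hw i).le, (show w k = w i by rw [h3])]
        · linarith [(hw k).le]
      have hvsum : ∑ k, v k = 1 := by
        simp only [hv, Finset.sum_sub_distrib, Finset.sum_add_distrib,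
          Finset.sum_ite_eq' Finset.univ, Finset.mem_univ, if_pos, hw1]
        ring
      have hv'sum : ∑ k, v' k = 1 := by
        simp only [hv', Finset.sum_sub_distrib, Finset.sum_add_distrib,
          Finset.sum_ite_eq' Finset.univ, Finset.mem_univ, if_pos, hw1]
        ring
      have hmeas : Measurable fun a => G a * |Real.log (f j a) - Real.log (f i a)| :=
        hGmeas.mul (((hfmeas j).log.sub (hfmeas i).log).abs)
      refine Integrable.mono'
        (((hgeom v hvnn hvsum).add (hgeom v' hv'nn hv'sum)).const_mul ((min (w i) (w j))⁻¹))
        hmeas.aestronglyMeasurable ?_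
      filter_upwards [hae] with a ha
      have hGpos : 0 < G a :=
        Finset.prod_pos fun k _ => Real.rpow_pos_of_pos (ha k) _
      rw [Real.norm_eq_abs, abs_of_nonneg (mul_nonneg hGpos.le (abs_nonneg _))]
      -- product identities
      have hPv : ∏ k, f k a ^ v k
          = G a * (f i a ^ w j * (f j a ^ w j)⁻¹) := by
        have h1 : ∀ k, f k a ^ v k
            = f k a ^ w k * ((if k = i then f i a ^ w j else 1)
              * (if k = j then (f j a ^ w j)⁻¹ else 1)) := by
          intro k
          simp only [hv]
          split_ifs with h1 h2 h3
          · exact absurd (h1.symm.trans h2) hij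
          · rw [h1, mul_one, sub_zero, Real.rpow_add (ha i)]
          · subst h3
            rw [one_mul, show w k + 0 - w k = 0 from by ring, Real.rpow_zero]
            exact (mul_inv_cancel₀ (Real.rpow_pos_of_pos (ha k) _).ne').symm
          · rw [mul_one, mul_one, add_zero, sub_zero]
        calc ∏ k, f k a ^ v k
            = ∏ k, (f k a ^ w k * ((if k = i then f i a ^ w j else 1)
              * (if k = j then (f j a ^ w j)⁻¹ else 1))) :=
              Finset.prod_congr rfl fun k _ => h1 k
          _ = G a * (f i a ^ w j * (f j a ^ w j)⁻¹) := by
              rw [Finset.prod_mul_distrib, Finset.prod_mul_distrib,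
                Finset.prod_ite_eq', Finset.prod_ite_eq']
              simp [hG]
      have hPv' : ∏ k, f k a ^ v' k
          = G a * (f j a ^ w i * (f i a ^ w i)⁻¹) := by
        have h1 : ∀ k, f k a ^ v' k
            = f k a ^ w k * ((if k = j then f j a ^ w i else 1)
              * (if k = i then (f i a ^ w i)⁻¹ else 1)) := by
          intro k
          simp only [hv']
          split_ifs with h1 h2 h3
          · exact absurd (h2.symm.trans h1) hij
          · rw [h1, mul_one, sub_zero, Real.rpow_add (ha j)]
          · subst h3
            rw [one_mul, show w k + 0 - w k = 0 from by ring, Real.rpow_zero]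
            exact (mul_inv_cancel₀ (Real.rpow_pos_of_pos (ha k) _).ne').symm
          · rw [mul_one, mul_one, add_zero, sub_zero]
        calc ∏ k, f k a ^ v' k
            = ∏ k, (f k a ^ w k * ((if k = j then f j a ^ w i else 1)
              * (if k = i then (f i a ^ w i)⁻¹ else 1))) :=
              Finset.prod_congr rfl fun k _ => h1 k
          _ = G a * (f j a ^ w i * (f i a ^ w i)⁻¹) := by
              rw [Finset.prod_mul_distrib, Finset.prod_mul_distrib,
                Finset.prod_ite_eq', Finset.prod_ite_eq']
              simp [hG]
      have hkey2 := gci_pair_bnd (ha i) (ha j) (hw i) (hw j)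
      have hpx : (0:ℝ) < f i a ^ w i := Real.rpow_pos_of_pos (ha i) _
      have hpy : (0:ℝ) < f j a ^ w j := Real.rpow_pos_of_pos (ha j) _
      have hpx' : (0:ℝ) < f i a ^ w j := Real.rpow_pos_of_pos (ha i) _
      have hpy' : (0:ℝ) < f j a ^ w i := Real.rpow_pos_of_pos (ha j) _
      have hXY : (0:ℝ) < f i a ^ w i * f j a ^ w j := mul_pos hpx hpy
      have e1 : G a * |Real.log (f j a) - Real.log (f i a)|
          = (G a / (f i a ^ w i * f j a ^ w j))
            * (f i a ^ w i * f j a ^ w j * |Real.log (f j a) - Real.log (f i a)|) := by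
        field_simp
      rw [e1]
      have e2 := mul_le_mul_of_nonneg_left hkey2 (div_nonneg hGpos.le hXY.le)
      refine e2.trans_eq ?_
      simp only [Pi.add_apply]
      rw [hPv, hPv', Real.rpow_add (ha i), Real.rpow_add (ha j)]
      field_simp
  -- fGCI basics
  have hfGCImeas : Measurable fGCI := by rw [hfGCI]; exact hGmeas.const_mul C⁻¹
  have hfGCIint : ∫ a, fGCI a ∂ν = 1 := by
    rw [hfGCI]
    rw [integral_const_mul]
    rw [hG] at hC
    rw [← hC, inv_mul_cancel₀ hCpos.ne']
  have hfGCIInt : Integrable fGCI ν := by rw [hfGCI]; exact hCfin.const_mul _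
  have hfGCIpos : ∀ᵐ a ∂ν, 0 < fGCI a := by
    filter_upwards [hae] with a ha
    rw [hfGCI]
    exact mul_pos (inv_pos.2 hCpos)
      (Finset.prod_pos fun i _ => Real.rpow_pos_of_pos (ha i) _)
  -- key pointwise identity
  have hkey : ∀ (d : α → ℝ) (a : α), (∀ i, 0 < f i a) → 0 ≤ d a →
      ∑ i, w i * (d a * Real.log (d a / f i a))
        = d a * Real.log (d a / fGCI a) - d a * Real.log C := by
    intro d a ha hd
    have hGpos : 0 < G a := Finset.prod_pos fun k _ => Real.rpow_pos_of_pos (ha k) _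
    have hfga : fGCI a = C⁻¹ * G a := by rw [hfGCI]
    have hfgpos : 0 < fGCI a := by rw [hfga]; exact mul_pos (inv_pos.2 hCpos) hGpos
    rcases hd.eq_or_lt with hd0 | hd0
    · simp [← hd0]
    · have hlogdiv : ∀ i, Real.log (d a / f i a) = Real.log (d a) - Real.log (f i a) :=
        fun i => Real.log_div hd0.ne' (ha i).ne'
      have hrhslog : Real.log (d a / fGCI a)
          = Real.log (d a) - Real.log (G a) + Real.log C := by
        rw [Real.log_div hd0.ne' hfgpos.ne', hfga,
          Real.log_mul (inv_ne_zero hCpos.ne') hGpos.ne', Real.log_inv]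
        ring
      have hstep : ∀ i, w i * (d a * Real.log (d a / f i a))
          = w i * (d a * Real.log (d a)) - d a * (w i * Real.log (f i a)) := by
        intro i; rw [hlogdiv i]; ring
      rw [Finset.sum_congr rfl fun i _ => hstep i, Finset.sum_sub_distrib,
        ← Finset.sum_mul, hw1, ← Finset.mul_sum, ← hlogG a ha, hrhslog]
      ring
  -- integrability of the GCI integrands
  have hHiInt : ∀ i, Integrable (fun a => fGCI a * Real.log (fGCI a / f i a)) ν := by
    intro i
    have hmeas : Measurable fun a => fGCI a * Real.log (fGCI a / f i a) :=
      hfGCImeas.mul (hfGCImeas.div (hfmeas i)).log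
    refine Integrable.mono'
      ((((integrable_finset_sum Finset.univ fun j _ => (hpair i j).const_mul (w j))).add
        (hCfin.const_mul |Real.log C|)).const_mul C⁻¹)
      hmeas.aestronglyMeasurable ?_
    filter_upwards [hae] with a ha
    have hGpos : 0 < G a := Finset.prod_pos fun k _ => Real.rpow_pos_of_pos (ha k) _
    have hfga : fGCI a = C⁻¹ * G a := by rw [hfGCI]
    have hfgpos : 0 < fGCI a := by rw [hfga]; exact mul_pos (inv_pos.2 hCpos) hGpos
    rw [Real.norm_eq_abs, abs_mul, abs_of_pos hfgpos]
    have hlog : Real.log (fGCI a / f i a)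
        = (Real.log (G a) - Real.log (f i a)) - Real.log C := by
      rw [Real.log_div hfgpos.ne' (ha i).ne', hfga,
        Real.log_mul (inv_ne_zero hCpos.ne') hGpos.ne', Real.log_inv]
      ring
    have hdiff : Real.log (G a) - Real.log (f i a)
        = ∑ j, w j * (Real.log (f j a) - Real.log (f i a)) := by
      rw [hlogG a ha]
      rw [Finset.sum_congr rfl fun j (_ : j ∈ Finset.univ) =>
        mul_sub (w j) (Real.log (f j a)) (Real.log (f i a)),
        Finset.sum_sub_distrib, ← Finset.sum_mul, hw1, one_mul]
    have habs : |Real.log (fGCI a / f i a)|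
        ≤ (∑ j, w j * |Real.log (f j a) - Real.log (f i a)|) + |Real.log C| := by
      rw [hlog]
      refine (abs_sub _ _).trans (add_le_add ?_ le_rfl)
      rw [hdiff]
      refine (Finset.abs_sum_le_sum_abs _ _).trans ?_
      refine Finset.sum_le_sum fun j _ => ?_
      rw [abs_mul, abs_of_pos (hw j)]
    calc fGCI a * |Real.log (fGCI a / f i a)|
        ≤ fGCI a * ((∑ j, w j * |Real.log (f j a) - Real.log (f i a)|) + |Real.log C|) :=
          mul_le_mul_of_nonneg_left habs hfgpos.le
      _ = C⁻¹ * ((∑ j, w j * (G a * |Real.log (f j a) - Real.log (f i a)|))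
            + |Real.log C| * G a) := by
          rw [hfga]
          have hms : ∑ j, w j * (G a * |Real.log (f j a) - Real.log (f i a)|)
              = G a * ∑ j, w j * |Real.log (f j a) - Real.log (f i a)| := by
            rw [Finset.mul_sum]
            exact Finset.sum_congr rfl fun j _ => by ring
          rw [hms]
          ring
  -- value of the LHS
  have hterm : ∀ i, klDivR ν fGCI (f i)
      = ((∫ a, fGCI a * Real.log (fGCI a / f i a) ∂ν : ℝ) : EReal) := by
    intro i
    rw [klDivR, if_pos]
    refine ⟨hHiInt i, ?_⟩
    filter_upwards [hfpos i] with a h h0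
    exact absurd h0 h.ne'
  have hLHSsum : ∑ i, w i * ∫ a, fGCI a * Real.log (fGCI a / f i a) ∂ν = - Real.log C := by
    have h1 : ∀ i, w i * ∫ a, fGCI a * Real.log (fGCI a / f i a) ∂ν
        = ∫ a, w i * (fGCI a * Real.log (fGCI a / f i a)) ∂ν :=
      fun i => (integral_const_mul _ _).symm
    rw [Finset.sum_congr rfl fun i _ => h1 i,
      ← integral_finset_sum _ (fun i _ => (hHiInt i).const_mul (w i))]
    have h2 : ∀ᵐ a ∂ν, ∑ i, w i * (fGCI a * Real.log (fGCI a / f i a))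
        = (- Real.log C) * fGCI a := by
      filter_upwards [hae, hfGCIpos] with a ha hfgpos
      rw [hkey fGCI a ha hfgpos.le, div_self hfgpos.ne', Real.log_one]
      ring
    rw [integral_congr_ae h2, integral_const_mul, hfGCIint, mul_one]
  have hLHS : (∑ i, (w i : EReal) * klDivR ν fGCI (f i))
      = ((- Real.log C : ℝ) : EReal) := by
    rw [Finset.sum_congr rfl fun i _ => by rw [hterm i], ← hLHSsum, gci_coe_sum]
    exact Finset.sum_congr rfl fun i _ => (EReal.coe_mul _ _).symm
  rw [hLHS]
  by_cases hall : ∀ i, Integrable (fun a => g a * Real.log (g a / f i a)) ν ∧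
      (∀ᵐ a ∂ν, f i a = 0 → g a = 0)
  · -- all RHS terms finite
    have hgInt : Integrable g ν := by
      by_contra h
      rw [integral_undef h] at hgint
      exact one_ne_zero hgint.symm
    have htermg : ∀ i, klDivR ν g (f i)
        = ((∫ a, g a * Real.log (g a / f i a) ∂ν : ℝ) : EReal) :=
      fun i => by rw [klDivR, if_pos (hall i)]
    have hDid : ∀ᵐ a ∂ν, g a * Real.log (g a / fGCI a)
        = (∑ i, w i * (g a * Real.log (g a / f i a))) + g a * Real.log C := by
      filter_upwards [hae, hg0] with a ha h0
      rw [hkey g a ha h0]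
      ring
    have hDint : Integrable (fun a => g a * Real.log (g a / fGCI a)) ν := by
      refine Integrable.congr ?_ (hDid.mono fun a h => h.symm)
      exact (integrable_finset_sum _ fun i _ => ((hall i).1.const_mul (w i))).add
        (hgInt.mul_const (Real.log C))
    have hD0 : 0 ≤ ∫ a, g a * Real.log (g a / fGCI a) ∂ν := by
      have hmono : ∀ᵐ a ∂ν, g a - fGCI a ≤ g a * Real.log (g a / fGCI a) := by
        filter_upwards [hg0, hfGCIpos] with a h0 hf
        rcases h0.eq_or_lt with h | h
        · rw [← h]
          simp
          linarith [hf.le]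
        · have h1 : Real.log (fGCI a / g a) ≤ fGCI a / g a - 1 :=
            Real.log_le_sub_one_of_pos (div_pos hf h)
          have h2 : Real.log (g a / fGCI a) = - Real.log (fGCI a / g a) := by
            rw [Real.log_div h.ne' hf.ne', Real.log_div hf.ne' h.ne']
            ring
          have h3 : g a * (fGCI a / g a) = fGCI a := by field_simp
          have h4 := mul_le_mul_of_nonneg_left h1 h.le
          rw [h2]
          nlinarith
      have hz : ∫ a, (g a - fGCI a) ∂ν = 0 := by
        rw [integral_sub hgInt hfGCIInt, hgint, hfGCIint]
        ring
      calc (0:ℝ) = ∫ a, (g a - fGCI a) ∂ν := hz.symm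
        _ ≤ _ := integral_mono_ae (hgInt.sub hfGCIInt) hDint hmono
    have hRHSsum : ∑ i, w i * ∫ a, g a * Real.log (g a / f i a) ∂ν
        = (∫ a, g a * Real.log (g a / fGCI a) ∂ν) - Real.log C := by
      have h1 : ∀ i, w i * ∫ a, g a * Real.log (g a / f i a) ∂ν
          = ∫ a, w i * (g a * Real.log (g a / f i a)) ∂ν :=
        fun i => (integral_const_mul _ _).symm
      rw [Finset.sum_congr rfl fun i _ => h1 i,
        ← integral_finset_sum _ (fun i _ => ((hall i).1.const_mul (w i)))]
      have h2 : ∀ᵐ a ∂ν, ∑ i, w i * (g a * Real.log (g a / f i a))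
          = g a * Real.log (g a / fGCI a) - Real.log C * g a := by
        filter_upwards [hae, hg0] with a ha h0
        rw [hkey g a ha h0]
        ring
      rw [integral_congr_ae h2, integral_sub hDint (hgInt.const_mul _),
        integral_const_mul, hgint, mul_one]
    have hfinal : (- Real.log C : ℝ) ≤ ∑ i, w i * ∫ a, g a * Real.log (g a / f i a) ∂ν := by
      rw [hRHSsum]
      linarith
    have hRHS : (∑ i, (w i : EReal) * klDivR ν g (f i))
        = ((∑ i, w i * ∫ a, g a * Real.log (g a / f i a) ∂ν : ℝ) : EReal) := by
      rw [Finset.sum_congr rfl fun i _ => by rw [htermg i], gci_coe_sum]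
      exact Finset.sum_congr rfl fun i _ => (EReal.coe_mul _ _).symm
    rw [hRHS]
    exact EReal.coe_le_coe_iff.2 hfinal
  · push_neg at hall
    obtain ⟨i, hi⟩ := hall
    have hti : klDivR ν g (f i) = ⊤ := by
      rw [klDivR, if_neg]
      exact fun h => hi h.1 (h.2.mono fun a ha hc => hc.2 (ha hc.1))
    have htop : (∑ i, (w i : EReal) * klDivR ν g (f i)) = ⊤ := by
      refine gci_ereal_sum_eq_top _ i ?_ ?_
      · rw [hti]; exact EReal.coe_mul_top_of_pos (hw i)
      · intro j
        rw [klDivR]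
        split
        · rw [← EReal.coe_mul]; exact EReal.coe_ne_bot _
        · simp [EReal.coe_mul_top_of_pos (hw j)]
    rw [htop]
    exact le_top
end
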